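/- Fix $\mu\in\mathbb{R}$, $\sigma>0$, $x_0<S$, $u\in\mathbb{R}$, and $0<\theta<t$, and set $m=\max\{u,0\}$. Define $\alpha_W(x,\theta\,|\,x_0)=\frac{1}{\sqrt{2\pi\sigma^2\theta}}\exp\{-\frac{(x-x_0-\mu\theta)^2}{2\sigma^2\theta}\}[1-\exp\{-\frac{2(S-x)(S-x_0)}{\sigma^2\theta}\}]$ and $g_W(S,\tau\,|\,y)=\frac{S-y}{\sqrt{2\pi\sigma^2\tau^3}}\exp\{-\frac{(S-y-\mu\tau)^2}{2\sigma^2\tau}\}$. Then $\int_{-\infty}^{S-m}\alpha_W(x,\theta\,|\,x_0)\,g_W(S,t-\theta\,|\,x+u)\,\mathrm{d}x=\frac{1}{2\pi t}\sqrt{\frac{\theta}{t-\theta}}\exp\{-\frac{(S-u-x_0-\mu t)^2}{2\sigma^2 t}\}\{A_-(\theta,u)-\exp[-\frac{2(S-x_0)u}{\sigma^2 t}]A_+(\theta,u)\}$, where $A_{\pm}(\theta,u)=\exp\{-\frac{[(m-u)\theta\pm(S-x_0\pm m)(t-\theta)]^2}{2\sigma^2\theta t(t-\theta)}\}\mp\sqrt{\frac{2\pi(t-\theta)}{\sigma^2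 t\theta}}\,(S-x_0\pm u)\{1-\Phi[\frac{(m-u)\theta\pm(S-x_0\pm m)(t-\theta)}{\sqrt{\sigma^2\theta t(t-\theta)}}]\}$. -/

import Mathlib

open MeasureTheory Real
open Set Filter Topology

/-- The standard normal distribution function `Φ`. -/
noncomputable def stdNormalCDF (z : ℝ) : ℝ :=
  (Real.sqrt (2 * Real.pi))⁻¹ * ∫ x in Set.Iic z, Real.exp (-x ^ 2 / 2)

lemma gauss_integrable : Integrable (fun x : ℝ => Real.exp (-x ^ 2 / 2)) := by
  have h := integrable_exp_neg_mul_sq (by norm_num : (0:ℝ) < 1/2)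
  exact h.congr (Filter.Eventually.of_forall fun x => by simp only []; congr 1; ring)

lemma gauss_total : ∫ x : ℝ, Real.exp (-x ^ 2 / 2) = Real.sqrt (2 * Real.pi) := by
  have h := integral_gaussian (1/2 : ℝ)
  rw [show (π / (1/2 : ℝ)) = 2 * π by ring] at h
  rw [← h]
  congr 1; funext x; congr 1; ring

lemma stdNormalCDF_neg (z : ℝ) : stdNormalCDF (-z) = 1 - stdNormalCDF z := by
  unfold stdNormalCDF
  have hint := gauss_integrable
  have h1 : ∫ x in Set.Iic (-z), Real.exp (-x ^ 2 / 2)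
      = ∫ x in Set.Ioi z, Real.exp (-x ^ 2 / 2) := by
    have := integral_comp_neg_Iic (-z) (fun x : ℝ => Real.exp (-x ^ 2 / 2))
    simp only [neg_neg, neg_sq] at this
    rw [← this]
  have h2 := MeasureTheory.integral_add_compl (measurableSet_Iic (a := z)) hint
  rw [compl_Iic] at h2
  have hw : Real.sqrt (2 * π) ≠ 0 := by positivity
  rw [h1]
  have h3 : ∫ x in Set.Ioi z, Real.exp (-x ^ 2 / 2)
      = Real.sqrt (2 * π) - ∫ x in Set.Iic z, Real.exp (-x ^ 2 / 2) := by
    rw [← gauss_total, ← h2]; ring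
  rw [h3]
  field_simp

lemma gauss_int1 (s c : ℝ) (hs : 0 < s) :
    Integrable (fun x : ℝ => Real.exp (-(x - c) ^ 2 / (2 * s ^ 2))) := by
  have h := (integrable_exp_neg_mul_sq (b := 1/(2*s^2)) (by positivity)).comp_sub_right c
  exact h.congr (Filter.Eventually.of_forall fun x => by
    simp only [Function.comp]; congr 1; field_simp)

lemma gauss_int2 (s c : ℝ) (hs : 0 < s) :
    Integrable (fun x : ℝ => (c - x) * Real.exp (-(x - c) ^ 2 / (2 * s ^ 2))) := by
  have h := ((integrable_mul_exp_neg_mul_sq (b := 1/(2*s^2)) (by positivity)).neg).comp_sub_right c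
  exact h.congr (Filter.Eventually.of_forall fun x => by
    simp only [Function.comp, neg_mul]
    rw [show c - x = -(x - c) by ring]
    rw [neg_mul]
    congr 2
    field_simp)

lemma gauss_int3 (s c p : ℝ) (hs : 0 < s) :
    Integrable (fun x : ℝ => (p - x) * Real.exp (-(x - c) ^ 2 / (2 * s ^ 2))) := by
  have h := ((gauss_int1 s c hs).const_mul (p - c)).add (gauss_int2 s c hs)
  exact h.congr (Filter.Eventually.of_forall fun x => by simp only [Pi.add_apply]; ring)

lemma gauss_cdf (s c L : ℝ) (hs : 0 < s) :
    ∫ x in Set.Iic L, Real.exp (-(x - c) ^ 2 / (2 * s ^ 2))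
      = s * Real.sqrt (2 * Real.pi) * stdNormalCDF ((L - c) / s) := by
  have hind : ∀ x : ℝ, Set.indicator (Set.Iic L)
      (fun x => Real.exp (-(x - c) ^ 2 / (2 * s ^ 2))) x
      = Set.indicator (Set.Iic ((L - c) / s)) (fun y => Real.exp (-y ^ 2 / 2)) ((x - c) / s) := by
    intro x
    have hmem : x ∈ Set.Iic L ↔ (x - c) / s ∈ Set.Iic ((L - c) / s) := by
      simp only [Set.mem_Iic, div_le_div_iff_of_pos_right hs]
      constructor <;> intro h <;> linarith
    by_cases hx : x ∈ Set.Iic L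
    · rw [Set.indicator_of_mem hx, Set.indicator_of_mem (hmem.mp hx)]
      congr 1
      rw [div_pow]
      field_simp
    · rw [Set.indicator_of_notMem hx, Set.indicator_of_notMem (fun h => hx (hmem.mpr h))]
  rw [← MeasureTheory.integral_indicator measurableSet_Iic]
  rw [show (fun x : ℝ => Set.indicator (Set.Iic L)
      (fun x => Real.exp (-(x - c) ^ 2 / (2 * s ^ 2))) x)
    = (fun x : ℝ => Set.indicator (Set.Iic ((L - c) / s))
        (fun y => Real.exp (-y ^ 2 / 2)) ((x - c) / s)) from funext hind]
  have h1 : ∫ x : ℝ, Set.indicator (Set.Iic ((L - c) / s))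
        (fun y => Real.exp (-y ^ 2 / 2)) ((x - c) / s)
      = ∫ x : ℝ, Set.indicator (Set.Iic ((L - c) / s))
        (fun y => Real.exp (-y ^ 2 / 2)) (x / s) :=
    integral_sub_right_eq_self (fun y : ℝ => Set.indicator (Set.Iic ((L - c) / s))
        (fun y => Real.exp (-y ^ 2 / 2)) (y / s)) c
  rw [h1, MeasureTheory.Measure.integral_comp_div (Set.indicator (Set.Iic ((L - c) / s))
        (fun y => Real.exp (-y ^ 2 / 2))) s]
  rw [MeasureTheory.integral_indicator measurableSet_Iic]
  rw [smul_eq_mul, abs_of_pos hs]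
  unfold stdNormalCDF
  have hw : Real.sqrt (2 * π) ≠ 0 := by positivity
  field_simp

lemma gauss_mom (s c L : ℝ) (hs : 0 < s) :
    ∫ x in Set.Iic L, (c - x) * Real.exp (-(x - c) ^ 2 / (2 * s ^ 2))
      = s ^ 2 * Real.exp (-(L - c) ^ 2 / (2 * s ^ 2)) := by
  have hderiv : ∀ x ∈ Set.Iic L, HasDerivAt
      (fun x : ℝ => s ^ 2 * Real.exp (-(x - c) ^ 2 / (2 * s ^ 2)))
      ((c - x) * Real.exp (-(x - c) ^ 2 / (2 * s ^ 2))) x := by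
    intro x _
    have h1 : HasDerivAt (fun x : ℝ => -(x - c) ^ 2 / (2 * s ^ 2))
        (-(2 * (x - c) ^ 1 * 1) / (2 * s ^ 2)) x :=
      (((hasDerivAt_id x).sub_const c).pow 2).neg.div_const (2 * s ^ 2)
    have h2 := (h1.exp).const_mul (s ^ 2)
    have heq : (c - x) * Real.exp (-(x - c) ^ 2 / (2 * s ^ 2)) = s ^ 2 * (Real.exp (-(x - c) ^ 2 / (2 * s ^ 2)) * (-(2 * (x - c) ^ 1 * 1) / (2 * s ^ 2))) := by
      field_simp
      ring
    rw [heq]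
    exact h2
  have htend : Tendsto (fun x : ℝ => s ^ 2 * Real.exp (-(x - c) ^ 2 / (2 * s ^ 2)))
      atBot (nhds 0) := by
    have hb : Tendsto (fun x : ℝ => x - c) atBot atBot := by
      simpa [sub_eq_add_neg] using tendsto_atBot_add_const_right atBot (-c) tendsto_id
    have habs : Tendsto (fun x : ℝ => |x - c|) atBot atTop := tendsto_abs_atBot_atTop.comp hb
    have hsq : Tendsto (fun x : ℝ => (x - c) ^ 2) atBot atTop := by
      have := (tendsto_pow_atTop (n := 2) two_ne_zero).comp habs
      have heq : ((fun x : ℝ => x ^ 2) ∘ fun x : ℝ => |x - c|) = fun x : ℝ => (x - c) ^ 2 := by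
        funext x; simp [Function.comp, sq_abs]
      rwa [heq] at this
    have hexp : Tendsto (fun x : ℝ => -(x - c) ^ 2 / (2 * s ^ 2)) atBot atBot :=
      Tendsto.atBot_div_const (by positivity) (tendsto_neg_atTop_atBot.comp hsq)
    have := (Real.tendsto_exp_atBot.comp hexp).const_mul (s ^ 2)
    simpa using this
  have := integral_Iic_of_hasDerivAt_of_tendsto' hderiv ((gauss_int2 s c hs).integrableOn) htend
  rw [this, sub_zero]

lemma gauss_key (v c p L : ℝ) (hv : 0 < v) :
    ∫ x in Set.Iic L, (p - x) * Real.exp (-(x - c) ^ 2 / (2 * v))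
      = v * Real.exp (-(L - c) ^ 2 / (2 * v))
        + (p - c) * (Real.sqrt v * Real.sqrt (2 * Real.pi))
          * stdNormalCDF ((L - c) / Real.sqrt v) := by
  set s := Real.sqrt v with hsdef
  have hs : 0 < s := Real.sqrt_pos.mpr hv
  have hs2 : s ^ 2 = v := Real.sq_sqrt hv.le
  rw [← hs2]
  have hsplit : ∀ x : ℝ, (p - x) * Real.exp (-(x - c) ^ 2 / (2 * s ^ 2))
      = (p - c) * Real.exp (-(x - c) ^ 2 / (2 * s ^ 2))
        + (c - x) * Real.exp (-(x - c) ^ 2 / (2 * s ^ 2)) := fun x => by ring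
  rw [MeasureTheory.setIntegral_congr_fun measurableSet_Iic fun x _ => hsplit x]
  rw [MeasureTheory.integral_add (((gauss_int1 s c hs).const_mul (p - c)).integrableOn)
    ((gauss_int2 s c hs).integrableOn)]
  rw [MeasureTheory.integral_const_mul, gauss_cdf s c L hs, gauss_mom s c L hs]
  ring

set_option maxHeartbeats 4000000 in
/-- Closed form of `∫_{-∞}^{S-m} α_W(x, θ | x₀) g_W(S, t-θ | x+u) dx`, where
`α_W` is the `S`-avoiding transition density and `g_W` the first-crossing-time
density of a Wiener process with drift `μ` and variance `σ²`, `m = max{u, 0}`,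
and `0 < θ < t`. -/
theorem stmt_11 (μ σ x0 S u θ t : ℝ) (hσ : 0 < σ) (hx0 : x0 < S)
    (hθ : 0 < θ) (hθt : θ < t)
    (m : ℝ) (hm : m = max u 0)
    (Aplus Aminus : ℝ)
    (hAplus : Aplus =
      Real.exp (-((m - u) * θ + (S - x0 + m) * (t - θ)) ^ 2 /
          (2 * σ ^ 2 * θ * t * (t - θ)))
        - Real.sqrt (2 * Real.pi * (t - θ) / (σ ^ 2 * t * θ)) * (S - x0 + u) *
            (1 - stdNormalCDF (((m - u) * θ + (S - x0 + m) * (t - θ)) /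
              Real.sqrt (σ ^ 2 * θ * t * (t - θ)))))
    (hAminus : Aminus =
      Real.exp (-((m - u) * θ - (S - x0 - m) * (t - θ)) ^ 2 /
          (2 * σ ^ 2 * θ * t * (t - θ)))
        + Real.sqrt (2 * Real.pi * (t - θ) / (σ ^ 2 * t * θ)) * (S - x0 - u) *
            (1 - stdNormalCDF (((m - u) * θ - (S - x0 - m) * (t - θ)) /
              Real.sqrt (σ ^ 2 * θ * t * (t - θ))))) :
    ∫ x in Set.Iic (S - m),
        ((Real.sqrt (2 * Real.pi * σ ^ 2 * θ))⁻¹ *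
            Real.exp (-(x - x0 - μ * θ) ^ 2 / (2 * σ ^ 2 * θ)) *
            (1 - Real.exp (-(2 * (S - x) * (S - x0)) / (σ ^ 2 * θ)))) *
          ((S - (x + u)) / Real.sqrt (2 * Real.pi * σ ^ 2 * (t - θ) ^ 3) *
            Real.exp (-(S - (x + u) - μ * (t - θ)) ^ 2 / (2 * σ ^ 2 * (t - θ))))
      = 1 / (2 * Real.pi * t) * Real.sqrt (θ / (t - θ)) *
          Real.exp (-(S - u - x0 - μ * t) ^ 2 / (2 * σ ^ 2 * t)) *
          (Aminus - Real.exp (-(2 * (S - x0) * u) / (σ ^ 2 * t)) * Aplus) := by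
  have htθ : 0 < t - θ := by linarith
  have ht : 0 < t := by linarith
  have hσ' : σ ≠ 0 := ne_of_gt hσ
  have hθ' : θ ≠ 0 := ne_of_gt hθ
  have ht' : t ≠ 0 := ne_of_gt ht
  have htθ' : t - θ ≠ 0 := ne_of_gt htθ
  have hv : 0 < (σ ^ 2 * θ * (t - θ) / t) := by positivity
  have hsv : Real.sqrt (σ ^ 2 * θ * (t - θ) / t) ≠ 0 := by positivity
  have step1 : ∀ x : ℝ,
      ((Real.sqrt (2 * Real.pi * σ ^ 2 * θ))⁻¹ * Real.exp (-(x - x0 - μ * θ) ^ 2 / (2 * σ ^ 2 * θ)) * (1 - Real.exp (-(2 * (S - x) * (S - x0)) / (σ ^ 2 * θ)))) * ((S - (x + u)) / Real.sqrt (2 * Real.pi * σ ^ 2 * (t - θ) ^ 3) * Real.exp (-(S - (x + u) - μ * (t - θ)) ^ 2 / (2 * σ ^ 2 * (t - θ))))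
      = ((Real.sqrt (2 * Real.pi * σ ^ 2 * θ))⁻¹ * (Real.sqrt (2 * Real.pi * σ ^ 2 * (t - θ) ^ 3))⁻¹ * Real.exp (-(S - u - x0 - μ * t) ^ 2 / (2 * σ ^ 2 * t))) * ((S - u - x) * Real.exp (-(x - (((t - θ) * (x0 + μ * θ) + θ * (S - u - μ * (t - θ))) / t)) ^ 2 / (2 * (σ ^ 2 * θ * (t - θ) / t))))
        - ((Real.sqrt (2 * Real.pi * σ ^ 2 * θ))⁻¹ * (Real.sqrt (2 * Real.pi * σ ^ 2 * (t - θ) ^ 3))⁻¹ * Real.exp (-(S - u - x0 - μ * t) ^ 2 / (2 * σ ^ 2 * t)) * Real.exp (-(2 * (S - x0) * u) / (σ ^ 2 * t))) * ((S - u - x) * Real.exp (-(x - (((t - θ) * (2 * S - x0 + μ * θ) + θ * (S - u - μ * (t - θ))) / t)) ^ 2 / (2 * (σ ^ 2 * θ * (t - θ) / t)))) := by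
    intro x
    have e1 : Real.exp (-(x - x0 - μ * θ) ^ 2 / (2 * σ ^ 2 * θ)) * Real.exp (-(S - (x + u) - μ * (t - θ)) ^ 2 / (2 * σ ^ 2 * (t - θ))) = Real.exp (-(S - u - x0 - μ * t) ^ 2 / (2 * σ ^ 2 * t)) * Real.exp (-(x - (((t - θ) * (x0 + μ * θ) + θ * (S - u - μ * (t - θ))) / t)) ^ 2 / (2 * (σ ^ 2 * θ * (t - θ) / t))) := by
      rw [← Real.exp_add, ← Real.exp_add]
      congr 1
      field_simp
      ring
    have e2 : Real.exp (-(x - x0 - μ * θ) ^ 2 / (2 * σ ^ 2 * θ)) * (Real.exp (-(2 * (S - x) * (S - x0)) / (σ ^ 2 * θ)) * Real.exp (-(S - (x + u) - μ * (t - θ)) ^ 2 / (2 * σ ^ 2 * (t - θ)))) = (Real.exp (-(S - u - x0 - μ * t) ^ 2 / (2 * σ ^ 2 * t)) * Real.exp (-(2 * (S - x0) * u) / (σ ^ 2 * t))) * Real.exp (-(x - (((t - θ) * (2 * S - x0 + μ * θ) + θ * (S - u - μ * (t - θ))) / t)) ^ 2 / (2 * (σ ^ 2 * θ * (t - θ)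 / t))) := by
      rw [← Real.exp_add, ← Real.exp_add, ← Real.exp_add, ← Real.exp_add]
      congr 1
      field_simp
      ring
    linear_combination
      ((Real.sqrt (2 * Real.pi * σ ^ 2 * θ))⁻¹ * (Real.sqrt (2 * Real.pi * σ ^ 2 * (t - θ) ^ 3))⁻¹ * (S - u - x)) * e1
      - ((Real.sqrt (2 * Real.pi * σ ^ 2 * θ))⁻¹ * (Real.sqrt (2 * Real.pi * σ ^ 2 * (t - θ) ^ 3))⁻¹ * (S - u - x)) * e2
  rw [MeasureTheory.setIntegral_congr_fun measurableSet_Iic fun x _ => step1 x]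
  have hintm : Integrable (fun x : ℝ => (S - u - x) * Real.exp (-(x - (((t - θ) * (x0 + μ * θ) + θ * (S - u - μ * (t - θ))) / t)) ^ 2 / (2 * (σ ^ 2 * θ * (t - θ) / t)))) := by
    have h := gauss_int3 (Real.sqrt (σ ^ 2 * θ * (t - θ) / t)) (((t - θ) * (x0 + μ * θ) + θ * (S - u - μ * (t - θ))) / t) (S - u) (Real.sqrt_pos.mpr hv)
    simpa only [Real.sq_sqrt hv.le] using h
  have hintp : Integrable (fun x : ℝ => (S - u - x) * Real.exp (-(x - (((t - θ) * (2 * S - x0 + μ * θ) + θ * (S - u - μ * (t - θ))) / t)) ^ 2 / (2 * (σ ^ 2 * θ * (t - θ) / t)))) := by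
    have h := gauss_int3 (Real.sqrt (σ ^ 2 * θ * (t - θ) / t)) (((t - θ) * (2 * S - x0 + μ * θ) + θ * (S - u - μ * (t - θ))) / t) (S - u) (Real.sqrt_pos.mpr hv)
    simpa only [Real.sq_sqrt hv.le] using h
  rw [MeasureTheory.integral_sub
    ((hintm.const_mul _).integrableOn)
    ((hintp.const_mul _).integrableOn)]
  rw [MeasureTheory.integral_const_mul, MeasureTheory.integral_const_mul]
  rw [gauss_key (σ ^ 2 * θ * (t - θ) / t) (((t - θ) * (x0 + μ * θ) + θ * (S - u - μ * (t - θ))) / t) (S - u) (S - m) hv, gauss_key (σ ^ 2 * θ * (t - θ) / t) (((t - θ) * (2 * S - x0 + μ * θ) + θ * (S - u - μ * (t - θ))) / t) (S - u) (S - m) hv]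
  rw [hAminus, hAplus]
  have hsqv : Real.sqrt (σ ^ 2 * θ * t * (t - θ)) = t * Real.sqrt (σ ^ 2 * θ * (t - θ) / t) := by
    rw [show σ ^ 2 * θ * t * (t - θ) = (t * Real.sqrt (σ ^ 2 * θ * (t - θ) / t)) ^ 2 by
      rw [mul_pow, Real.sq_sqrt hv.le]; field_simp]
    exact Real.sqrt_sq (by positivity)
  have hargm : (S - m - (((t - θ) * (x0 + μ * θ) + θ * (S - u - μ * (t - θ))) / t)) / Real.sqrt (σ ^ 2 * θ * (t - θ) / t) = -(((m - u) * θ - (S - x0 - m) * (t - θ)) / Real.sqrt (σ ^ 2 * θ * t * (t - θ))) := by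
    rw [hsqv]
    field_simp
    ring
  have hargp : (S - m - (((t - θ) * (2 * S - x0 + μ * θ) + θ * (S - u - μ * (t - θ))) / t)) / Real.sqrt (σ ^ 2 * θ * (t - θ) / t) = -(((m - u) * θ + (S - x0 + m) * (t - θ)) / Real.sqrt (σ ^ 2 * θ * t * (t - θ))) := by
    rw [hsqv]
    field_simp
    ring
  have hPhim : stdNormalCDF ((S - m - (((t - θ) * (x0 + μ * θ) + θ * (S - u - μ * (t - θ))) / t)) / Real.sqrt (σ ^ 2 * θ * (t - θ) / t))
      = 1 - stdNormalCDF (((m - u) * θ - (S - x0 - m) * (t - θ)) / Real.sqrt (σ ^ 2 * θ * t * (t - θ))) := by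
    rw [hargm, stdNormalCDF_neg]
  have hPhip : stdNormalCDF ((S - m - (((t - θ) * (2 * S - x0 + μ * θ) + θ * (S - u - μ * (t - θ))) / t)) / Real.sqrt (σ ^ 2 * θ * (t - θ) / t))
      = 1 - stdNormalCDF (((m - u) * θ + (S - x0 + m) * (t - θ)) / Real.sqrt (σ ^ 2 * θ * t * (t - θ))) := by
    rw [hargp, stdNormalCDF_neg]
  have hexpm : Real.exp (-(S - m - (((t - θ) * (x0 + μ * θ) + θ * (S - u - μ * (t - θ))) / t)) ^ 2 / (2 * (σ ^ 2 * θ * (t - θ) / t)))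
      = Real.exp (-((m - u) * θ - (S - x0 - m) * (t - θ)) ^ 2 / (2 * σ ^ 2 * θ * t * (t - θ))) := by
    congr 1
    field_simp
    ring
  have hexpp : Real.exp (-(S - m - (((t - θ) * (2 * S - x0 + μ * θ) + θ * (S - u - μ * (t - θ))) / t)) ^ 2 / (2 * (σ ^ 2 * θ * (t - θ) / t)))
      = Real.exp (-((m - u) * θ + (S - x0 + m) * (t - θ)) ^ 2 / (2 * σ ^ 2 * θ * t * (t - θ))) := by
    congr 1
    field_simp
    ring
  rw [hPhim, hPhip, hexpm, hexpp]
  have hcm : S - u - (((t - θ) * (x0 + μ * θ) + θ * (S - u - μ * (t - θ))) / t) = (t - θ) * (S - u - x0) / t := by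
    field_simp
    ring
  have hcp : S - u - (((t - θ) * (2 * S - x0 + μ * θ) + θ * (S - u - μ * (t - θ))) / t) = -((t - θ) * (S - x0 + u)) / t := by
    field_simp
    ring
  rw [hcm, hcp]
  obtain ⟨pp, hpp, hpp2⟩ : ∃ p : ℝ, 0 < p ∧ θ = p ^ 2 :=
    ⟨Real.sqrt θ, Real.sqrt_pos.mpr hθ, (Real.sq_sqrt hθ.le).symm⟩
  obtain ⟨qq, hqq, hqq2⟩ : ∃ q : ℝ, 0 < q ∧ t - θ = q ^ 2 :=
    ⟨Real.sqrt (t - θ), Real.sqrt_pos.mpr htθ, (Real.sq_sqrt htθ.le).symm⟩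
  obtain ⟨rr, hrr, hrr2⟩ : ∃ r : ℝ, 0 < r ∧ t = r ^ 2 :=
    ⟨Real.sqrt t, Real.sqrt_pos.mpr ht, (Real.sq_sqrt ht.le).symm⟩
  obtain ⟨ww, hww, hww2⟩ : ∃ w : ℝ, 0 < w ∧ 2 * Real.pi = w ^ 2 :=
    ⟨Real.sqrt (2 * Real.pi), Real.sqrt_pos.mpr Real.two_pi_pos, (Real.sq_sqrt Real.two_pi_pos.le).symm⟩
  rw [hpp2, hrr2, hww2]
  rw [show rr ^ 2 - pp ^ 2 = qq ^ 2 by rw [← hpp2, ← hrr2]; exact hqq2]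
  have s1 : Real.sqrt (ww ^ 2 * σ ^ 2 * pp ^ 2) = ww * σ * pp := by
    rw [show ww ^ 2 * σ ^ 2 * pp ^ 2 = (ww * σ * pp) ^ 2 by ring]
    exact Real.sqrt_sq (by positivity)
  have s2 : Real.sqrt (ww ^ 2 * σ ^ 2 * (qq ^ 2) ^ 3) = ww * σ * qq ^ 3 := by
    rw [show ww ^ 2 * σ ^ 2 * (qq ^ 2) ^ 3 = (ww * σ * qq ^ 3) ^ 2 by ring]
    exact Real.sqrt_sq (by positivity)
  have s3 : Real.sqrt (σ ^ 2 * pp ^ 2 * qq ^ 2 / rr ^ 2) = σ * pp * qq / rr := by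
    rw [show σ ^ 2 * pp ^ 2 * qq ^ 2 / rr ^ 2 = (σ * pp * qq / rr) ^ 2 by ring]
    exact Real.sqrt_sq (by positivity)
  have s4 : Real.sqrt (ww ^ 2) = ww := Real.sqrt_sq hww.le
  have s5 : Real.sqrt (pp ^ 2 / qq ^ 2) = pp / qq := by
    rw [show pp ^ 2 / qq ^ 2 = (pp / qq) ^ 2 by ring]
    exact Real.sqrt_sq (by positivity)
  have s6 : Real.sqrt (ww ^ 2 * qq ^ 2 / (σ ^ 2 * rr ^ 2 * pp ^ 2)) = ww * qq / (σ * rr * pp) := by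
    rw [show ww ^ 2 * qq ^ 2 / (σ ^ 2 * rr ^ 2 * pp ^ 2) = (ww * qq / (σ * rr * pp)) ^ 2 by ring]
    exact Real.sqrt_sq (by positivity)
  rw [s1, s2, s3, s4, s5, s6]
  have hpp' : pp ≠ 0 := ne_of_gt hpp
  have hqq' : qq ≠ 0 := ne_of_gt hqq
  have hrr' : rr ≠ 0 := ne_of_gt hrr
  have hww' : ww ≠ 0 := ne_of_gt hww
  field_simp
  ring
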